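/- Let D ⊂ ℂⁿ be a bounded convex domain, r > 0, and D_r := D ∩ {z : Re(z_n) < r}. Assume D ⊂ {Re z_n > 0}. Then for every p ∈ D_r and every v ∈ ℂⁿ, K_{D_{2r}}(p, v) ≤ 2 K_D(p, v). -/

import Mathlib

open Set Metric

/-- The Kobayashi infinitesimal pseudometric of a domain `D` in a complex normed space. -/
noncomputable def kobMetric {E : Type*} [NormedAddCommGroup E] [NormedSpace ℂ E]
    (D : Set E) (p v : E) : ℝ :=
  sInf {α : ℝ | 0 < α ∧ ∃ f : ℂ → E, DifferentiableOn ℂ f (ball (0:ℂ) 1) ∧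
    MapsTo f (ball (0:ℂ) 1) D ∧ f 0 = p ∧ fderiv ℂ f 0 1 = α⁻¹ • v}

section Helpers

open Complex ComplexConjugate

variable {E : Type*} [NormedAddCommGroup E] [NormedSpace ℂ E]



/-- Schwarz-type estimate for holomorphic maps of the disk into a half-plane. -/
lemma halfplane_deriv_bound {h : ℂ → ℂ} {cc : ℝ} (hh : DifferentiableOn ℂ h (ball 0 1))
    (hmaps : ∀ ζ ∈ ball (0:ℂ) 1, (h ζ).re < cc) {h' : ℂ} (hd : HasDerivAt h h' 0) :
    ‖h'‖ ≤ 2 * (cc - (h 0).re) := by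
  set w₀ : ℂ := h 0 with hw₀
  have h0mem : (0:ℂ) ∈ ball (0:ℂ) 1 := by simp
  have hw₀re : w₀.re < cc := hmaps 0 h0mem
  set den : ℂ → ℂ := fun w => 2 * (cc : ℂ) - w - conj w₀ with hden_def
  have hden_re : ∀ w : ℂ, (den w).re = 2 * cc - w.re - w₀.re := by
    intro w; simp [den]
  have hden_ne : ∀ w : ℂ, w.re < cc → den w ≠ 0 := by
    intro w hw hzero
    have := hden_re w
    rw [hzero] at this
    simp at this
    linarith
  set M : ℂ → ℂ := fun w => (w - w₀) / den w with hM_def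
  set g : ℂ → ℂ := M ∘ h with hg_def
  -- norm inequality giving mapsTo
  have key : ∀ w : ℂ, w.re < cc → ‖w - w₀‖ < ‖den w‖ := by
    intro w hw
    have h1 : ‖w - w₀‖ ^ 2 < ‖den w‖ ^ 2 := by
      rw [Complex.sq_norm, Complex.sq_norm]
      have hre1 : (w - w₀).re = w.re - w₀.re := by simp
      have him1 : (w - w₀).im = w.im - w₀.im := by simp
      have hre2 : (den w).re = 2 * cc - w.re - w₀.re := hden_re w
      have him2 : (den w).im = -w.im + w₀.im := by simp [den]
      rw [Complex.normSq_apply, Complex.normSq_apply, hre1, him1, hre2, him2]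
      nlinarith [sq_nonneg (w.im - w₀.im), mul_pos (sub_pos.2 hw) (sub_pos.2 hw₀re)]
    have := lt_of_pow_lt_pow_left₀ 2 (norm_nonneg _) h1
    simpa using this
  have hmapsg : MapsTo g (ball (0:ℂ) 1) (ball (0:ℂ) 1) := by
    intro ζ hζ
    have hre := hmaps ζ hζ
    have := key (h ζ) hre
    rw [mem_ball_zero_iff]
    simp only [g, M, Function.comp_apply, norm_div]
    rw [div_lt_one (lt_of_le_of_lt (norm_nonneg _) this)]
    exact this
  have hg0 : g 0 = 0 := by simp [g, M, hw₀]
  have hdiffg : DifferentiableOn ℂ g (ball (0:ℂ) 1) := by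
    apply DifferentiableOn.div
    · exact hh.sub_const w₀
    · exact ((differentiableOn_const _).sub hh).sub_const _
    · intro ζ hζ; exact hden_ne (h ζ) (hmaps ζ hζ)
  -- derivative of M at w₀
  have hMd : HasDerivAt M (den w₀)⁻¹ w₀ := by
    have hnum : HasDerivAt (fun w : ℂ => w - w₀) 1 w₀ := (hasDerivAt_id w₀).sub_const w₀
    have hden' : HasDerivAt den (-1) w₀ := by
      have : HasDerivAt (fun w : ℂ => 2 * (cc : ℂ) - w) (-1) w₀ := by
        simpa using (hasDerivAt_id w₀).const_sub (2 * (cc:ℂ))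
      simpa [den] using this.sub_const (conj w₀)
    have := hnum.div hden' (hden_ne w₀ hw₀re)
    have heq : (1 * den w₀ - (w₀ - w₀) * -1) / den w₀ ^ 2 = (den w₀)⁻¹ := by
      field_simp [hden_ne w₀ hw₀re]; ring
    rw [heq] at this
    exact this
  have hgd : HasDerivAt g ((den w₀)⁻¹ * h') 0 := by
    have := HasDerivAt.comp (0:ℂ) (by rwa [← hw₀]) hd
    simpa [g] using this
  have hschwarz : ‖deriv g 0‖ ≤ 1 / 1 :=
    Complex.norm_deriv_le_div_of_mapsTo_ball hdiffg (by rw [hg0]; exact hmapsg.mono_right ball_subset_closedBall) one_pos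
  rw [hgd.deriv] at hschwarz
  have hdenval : den w₀ = ((2 * (cc - w₀.re) : ℝ) : ℂ) := by
    apply Complex.ext <;> simp [den] <;> ring
  have hdennorm : ‖den w₀‖ = 2 * (cc - w₀.re) := by
    rw [hdenval, Complex.norm_real, Real.norm_eq_abs, abs_of_pos (by linarith)]
  rw [norm_mul, norm_inv, hdennorm] at hschwarz
  have hpos : 0 < 2 * (cc - w₀.re) := by linarith
  calc ‖h'‖ = (2 * (cc - w₀.re)) * ((2 * (cc - w₀.re))⁻¹ * ‖h'‖) := by
        rw [← mul_assoc, mul_inv_cancel₀ (ne_of_gt hpos), one_mul]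
    _ ≤ (2 * (cc - w₀.re)) * 1 := by
        apply mul_le_mul_of_nonneg_left _ (le_of_lt hpos)
        simpa using hschwarz
    _ = 2 * (cc - w₀.re) := mul_one _




/-- A linear disk of radius `d` inside `U` gives a Kobayashi competitor with value `1/d`. -/
lemma mem_kobSet (U : Set E) (p v : E) (d : ℝ) (hd : 0 < d)
    (hball : ∀ z : ℂ, ‖z‖ < d → p + z • v ∈ U) :
    (1/d) ∈ {α : ℝ | 0 < α ∧ ∃ f : ℂ → E, DifferentiableOn ℂ f (ball (0:ℂ) 1) ∧
      MapsTo f (ball (0:ℂ) 1) U ∧ f 0 = p ∧ fderiv ℂ f 0 1 = α⁻¹ • v} := by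
  set w : E := (d : ℂ) • v with hw
  set T : ℂ →L[ℂ] E := ContinuousLinearMap.smulRight (1 : ℂ →L[ℂ] ℂ) w with hT
  refine ⟨by positivity, fun ζ => p + ζ • w, ?_, ?_, by simp, ?_⟩
  · intro ζ _
    apply DifferentiableWithinAt.const_add
    exact (differentiableWithinAt_id.smul_const w)
  · intro ζ hζ
    rw [mem_ball_zero_iff] at hζ
    show p + ζ • w ∈ U
    have : ζ • w = (ζ * d) • v := by rw [hw, smul_smul]
    rw [this]
    apply hball
    rw [norm_mul]
    calc ‖ζ‖ * ‖(d:ℂ)‖ < 1 * ‖(d:ℂ)‖ := by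
          apply mul_lt_mul_of_pos_right hζ
          simpa [Complex.norm_real, Real.norm_eq_abs, abs_of_pos hd] using hd
      _ = d := by simp [Complex.norm_real, Real.norm_eq_abs, abs_of_pos hd]
  · have hF : HasFDerivAt (fun ζ : ℂ => p + ζ • w) T 0 := by
      have : HasFDerivAt (fun ζ : ℂ => ζ • w) T 0 := by
        convert (ContinuousLinearMap.hasFDerivAt (x := (0:ℂ)) T) using 1
        funext ζ
        simp [hT]
      exact this.const_add p
    rw [hF.fderiv]
    have : T 1 = w := by simp [hT]
    rw [this, hw, one_div, inv_inv, Complex.coe_smul]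

/-- Every Kobayashi competitor for a convex open set is bounded below via a separating point. -/
lemma competitor_bound {D : Set E} (hconv : Convex ℝ D) (hopen : IsOpen D)
    {p v : E} (hp : p ∈ D) {lam : ℂ} (hq : p + lam • v ∉ D)
    {α : ℝ} (hα : 0 < α) {f : ℂ → E} (hf : DifferentiableOn ℂ f (ball (0:ℂ) 1))
    (hmaps : MapsTo f (ball (0:ℂ) 1) D) (hf0 : f 0 = p)
    (hder : fderiv ℂ f 0 1 = α⁻¹ • v) :
    α⁻¹ ≤ 2 * ‖lam‖ := by
  set q : E := p + lam • v with hqdef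
  obtain ⟨ℓ, hℓ⟩ := geometric_hahn_banach_open_point hconv hopen hq
  set L : E →L[ℂ] ℂ := ℓ.extendTo𝕜' with hL
  have hre : ∀ x : E, (L x).re = ℓ x := by
    intro x
    exact StrongDual.re_extendRCLike_apply (𝕜 := ℂ) ℓ x
  set cc : ℝ := ℓ q with hcc
  -- the composed map into the half-plane
  set h : ℂ → ℂ := fun ζ => L (f ζ) with hh_def
  have hdiffh : DifferentiableOn ℂ h (ball 0 1) := L.differentiable.comp_differentiableOn hf
  have hmapsh : ∀ ζ ∈ ball (0:ℂ) 1, (h ζ).re < cc := by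
    intro ζ hζ
    rw [hh_def]
    simp only
    rw [hre]
    exact hℓ _ (hmaps hζ)
  have hfd : DifferentiableAt ℂ f 0 :=
    hf.differentiableAt (isOpen_ball.mem_nhds (by simp))
  have hDf : HasFDerivAt f (fderiv ℂ f 0) 0 := hfd.hasFDerivAt
  have hhd : HasDerivAt h (L (α⁻¹ • v)) 0 := by
    have := (L.hasFDerivAt.comp 0 hDf).hasDerivAt
    simpa [hh_def, hder, Function.comp_def] using this
  have hbound := halfplane_deriv_bound hdiffh hmapsh hhd
  have hh0 : h 0 = L p := by rw [hh_def]; simp [hf0]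
  rw [hh0, hre] at hbound
  -- compute the right side
  have hqp : ℓ q - ℓ p = (lam * L v).re := by
    have : ℓ q = ℓ p + ℓ (lam • v) := by rw [hqdef]; rw [map_add]
    rw [this]
    have : ℓ (lam • v) = (L (lam • v)).re := (hre _).symm
    rw [this, map_smul, smul_eq_mul]
    ring
  have hLsmul : L (α⁻¹ • v) = (α⁻¹ : ℝ) • L v := by
    rw [← Complex.coe_smul, map_smul, Complex.coe_smul]
  rw [hLsmul] at hbound
  have hnorm : ‖(α⁻¹ : ℝ) • L v‖ = α⁻¹ * ‖L v‖ := by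
    rw [norm_smul, Real.norm_eq_abs, abs_of_pos (by positivity)]
  rw [hnorm] at hbound
  have hLv : L v ≠ 0 := by
    intro h0
    have h1 : ℓ p < ℓ q := hℓ p hp
    have h2 : ℓ q - ℓ p = 0 := by rw [hqp, h0, mul_zero, Complex.zero_re]
    linarith
  have hre_le : (lam * L v).re ≤ ‖lam‖ * ‖L v‖ := by
    calc (lam * L v).re ≤ ‖lam * L v‖ := Complex.re_le_norm _
      _ = ‖lam‖ * ‖L v‖ := by rw [norm_mul]
  have hLv' : 0 < ‖L v‖ := norm_pos_iff.2 hLv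
  have : α⁻¹ * ‖L v‖ ≤ 2 * (‖lam‖ * ‖L v‖) := by
    calc α⁻¹ * ‖L v‖ ≤ 2 * (cc - ℓ p) := hbound
      _ = 2 * (ℓ q - ℓ p) := by rw [hcc]
      _ = 2 * (lam * L v).re := by rw [hqp]
      _ ≤ 2 * (‖lam‖ * ‖L v‖) := by linarith
  have h2 : α⁻¹ * ‖L v‖ ≤ (2 * ‖lam‖) * ‖L v‖ := by linarith
  exact le_of_mul_le_mul_right h2 hLv'

end Helpers

open Complex ComplexConjugate in

/-- doubling lemma: `D ⊆ ℂⁿ` bounded convex domain contained in `{Re z_n > 0}`,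
`D_s := D ∩ {Re z_n < s}`. Then for every `p ∈ D_r` and every `v`,
`K_{D_{2r}}(p, v) ≤ 2 K_D(p, v)`. -/
theorem kobayashi_doubling
    (n : ℕ) (D : Set (EuclideanSpace ℂ (Fin (n + 1))))
    (hconv : Convex ℝ D) (hopen : IsOpen D) (hbdd : Bornology.IsBounded D)
    (hhalf : D ⊆ {z : EuclideanSpace ℂ (Fin (n + 1)) | 0 < (z (Fin.last n)).re})
    (r : ℝ) (hr : 0 < r)
    (p : EuclideanSpace ℂ (Fin (n + 1)))
    (hp : p ∈ D ∩ {z : EuclideanSpace ℂ (Fin (n + 1)) | (z (Fin.last n)).re < r})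
    (v : EuclideanSpace ℂ (Fin (n + 1))) :
    kobMetric (D ∩ {z : EuclideanSpace ℂ (Fin (n + 1)) | (z (Fin.last n)).re < 2 * r}) p v ≤
      2 * kobMetric D p v := by
  obtain ⟨hpD, hpr⟩ := hp
  have hpr : (p (Fin.last n)).re < r := hpr
  set D2 : Set (EuclideanSpace ℂ (Fin (n+1))) :=
    D ∩ {z : EuclideanSpace ℂ (Fin (n + 1)) | (z (Fin.last n)).re < 2 * r} with hD2
  have hbdd_below : BddBelow {α : ℝ | 0 < α ∧ ∃ f : ℂ → EuclideanSpace ℂ (Fin (n+1)),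
      DifferentiableOn ℂ f (ball (0:ℂ) 1) ∧ MapsTo f (ball (0:ℂ) 1) D2 ∧ f 0 = p ∧
      fderiv ℂ f 0 1 = α⁻¹ • v} := ⟨0, fun x hx => le_of_lt hx.1⟩
  have hpD2 : p ∈ D2 := ⟨hpD, by simp only [mem_setOf_eq]; linarith⟩
  by_cases hv : v = 0
  · subst hv
    have hub : ∀ d : ℝ, 0 < d → kobMetric D2 p 0 ≤ 1/d := by
      intro d hd
      exact csInf_le hbdd_below (mem_kobSet D2 p 0 d hd (fun z _ => by simpa using hpD2))
    have hrhs : 0 ≤ kobMetric D p 0 := Real.sInf_nonneg (fun x hx => le_of_lt hx.1)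
    have hlhs : kobMetric D2 p 0 ≤ 0 := by
      by_contra hcon
      push_neg at hcon
      have h1 := hub (2 / kobMetric D2 p 0) (by positivity)
      rw [one_div, inv_div] at h1
      linarith
    linarith
  · have hvn : 0 < ‖v‖ := norm_pos_iff.2 hv
    set S : Set ℂ := {z : ℂ | p + z • v ∈ D} with hS
    set S2 : Set ℂ := {z : ℂ | p + z • v ∈ D2} with hS2
    -- Sᶜ nonempty
    obtain ⟨C, hC⟩ := hbdd.exists_norm_le
    have hC0 : 0 ≤ C := le_trans (norm_nonneg p) (hC p hpD)
    set x₀ : ℝ := (C + ‖p‖ + 1)/‖v‖ with hx₀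
    have hz₀mem : ((x₀ : ℝ) : ℂ) ∈ Sᶜ := by
      intro hmem
      have h1 := hC _ hmem
      have h2 : ‖((x₀:ℝ):ℂ) • v‖ ≤ ‖p + ((x₀:ℝ):ℂ) • v‖ + ‖p‖ := by
        calc ‖((x₀:ℝ):ℂ) • v‖ = ‖(p + ((x₀:ℝ):ℂ) • v) - p‖ := by rw [add_sub_cancel_left]
          _ ≤ ‖p + ((x₀:ℝ):ℂ) • v‖ + ‖p‖ := norm_sub_le _ _
      have h3 : ‖((x₀:ℝ):ℂ) • v‖ = C + ‖p‖ + 1 := by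
        rw [norm_smul, Complex.norm_real, Real.norm_eq_abs,
          abs_of_pos (by positivity), hx₀]
        field_simp
      linarith
    have hScne : Sᶜ.Nonempty := ⟨_, hz₀mem⟩
    have hS2sub : S2 ⊆ S := fun z hz => hz.1
    have hS2cne : S2ᶜ.Nonempty := ⟨_, fun h => hz₀mem (hS2sub h)⟩
    have hcont : Continuous (fun z : ℂ => p + z • v) :=
      continuous_const.add (continuous_id.smul continuous_const)
    have hlastcont : Continuous (fun z : EuclideanSpace ℂ (Fin (n+1)) => (z (Fin.last n)).re) :=
      Complex.continuous_re.comp (EuclideanSpace.proj (Fin.last n)).continuous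
    have hD2open : IsOpen D2 := hopen.inter (isOpen_lt hlastcont continuous_const)
    have hSopen : IsOpen S := hopen.preimage hcont
    have hS2open : IsOpen S2 := hD2open.preimage hcont
    have h0S2 : (0:ℂ) ∈ S2 := by simpa [hS2] using hpD2
    set δ : ℝ := infDist 0 Sᶜ with hδ
    set δ2 : ℝ := infDist 0 S2ᶜ with hδ2
    have hδpos : 0 < δ := by
      have h0S : (0:ℂ) ∈ S := by
        simp only [hS, mem_setOf_eq, zero_smul, add_zero]
        exact hpD
      rw [hδ, ← (hSopen.isClosed_compl.notMem_iff_infDist_pos hScne)]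
      simpa using h0S
    have hδ2pos : 0 < δ2 := by
      rw [hδ2, ← (hS2open.isClosed_compl.notMem_iff_infDist_pos hS2cne)]
      simpa using h0S2
    -- key geometric step: δ ≤ dist 0 z for every z ∉ S2
    have hkey : ∀ z ∈ S2ᶜ, δ ≤ dist (0:ℂ) z := by
      intro z hz
      by_cases hzS : z ∈ S
      · have hzre : 2*r ≤ ((p + z • v) (Fin.last n)).re := by
          by_contra hlt
          push_neg at hlt
          exact hz ⟨hzS, hlt⟩
        set a : ℝ := (p (Fin.last n)).re with ha
        have ha0 : 0 < a := hhalf hpD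
        have hco : ∀ w : ℂ, ((p + w • v) (Fin.last n)).re = a + (w * v (Fin.last n)).re := by
          intro w
          simp [PiLp.add_apply, PiLp.smul_apply, smul_eq_mul, ha]
        have hzb : r ≤ (z * v (Fin.last n)).re := by
          have := hco z
          rw [this] at hzre
          linarith
        set t : ℝ := a / (z * v (Fin.last n)).re with ht
        have hzbpos : 0 < (z * v (Fin.last n)).re := by linarith
        have ht0 : 0 < t := div_pos ha0 hzbpos
        have ht1 : t ≤ 1 := by
          rw [ht, div_le_one hzbpos]
          linarith
        set μ : ℂ := -((t:ℝ):ℂ) * z with hμdef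
        have hμ : μ ∈ Sᶜ := by
          intro hmem
          have hpos := hhalf hmem
          have : ((p + μ • v) (Fin.last n)).re = a - t * (z * v (Fin.last n)).re := by
            rw [hco μ, hμdef]
            have : (-((t:ℝ):ℂ) * z * v (Fin.last n)).re
                = -t * (z * v (Fin.last n)).re := by
              rw [mul_assoc, ← Complex.ofReal_neg, Complex.re_ofReal_mul]
            rw [this]
            ring
          have hzero : ((p + μ • v) (Fin.last n)).re = 0 := by
            rw [this, ht, div_mul_cancel₀ a (ne_of_gt hzbpos), sub_self]
          have : (0:ℝ) < ((p + μ • v) (Fin.last n)).re := hpos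
          linarith
        have hle : δ ≤ dist (0:ℂ) μ := infDist_le_dist_of_mem hμ
        have : dist (0:ℂ) μ ≤ dist (0:ℂ) z := by
          simp only [dist_zero_left]
          rw [hμdef, norm_mul, norm_neg, Complex.norm_real, Real.norm_eq_abs, abs_of_pos ht0]
          calc t * ‖z‖ ≤ 1 * ‖z‖ := mul_le_mul_of_nonneg_right ht1 (norm_nonneg _)
            _ = ‖z‖ := one_mul _
        linarith
      · exact infDist_le_dist_of_mem hzS
    have hδle : δ ≤ δ2 := by
      by_contra hcon
      push_neg at hcon
      obtain ⟨z, hzmem, hzd⟩ := (infDist_lt_iff hS2cne).1 hcon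
      exact absurd (hkey z hzmem) (by linarith)
    -- lower bound for kobMetric D
    have hlow : 1/(2*δ) ≤ kobMetric D p v := by
      apply le_csInf
      · obtain ⟨ε, hε, hball⟩ := Metric.isOpen_iff.1 hopen p hpD
        refine ⟨1/(ε/(‖v‖+1)), mem_kobSet D p v _ (by positivity) ?_⟩
        intro z hz
        apply hball
        rw [mem_ball, dist_eq_norm, add_sub_cancel_left, norm_smul]
        calc ‖z‖ * ‖v‖ < (ε/(‖v‖+1)) * (‖v‖+1) := by
              apply mul_lt_mul' (le_of_lt hz) (by linarith) (norm_nonneg _) (by positivity)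
          _ = ε := by field_simp
      · rintro b ⟨hb, f, hf, hmaps, hf0, hder⟩
        have hαinv : b⁻¹ ≤ 2*δ := by
          by_contra hcon
          push_neg at hcon
          have hδ' : δ < b⁻¹/2 := by linarith
          obtain ⟨lam, hlamS, hlamd⟩ := (infDist_lt_iff hScne).1 hδ'
          have hbnd := competitor_bound hconv hopen hpD hlamS hb hf hmaps hf0 hder
          rw [dist_zero_left] at hlamd
          linarith
        rw [one_div]
        have h2δpos : 0 < 2*δ := by linarith
        calc (2*δ)⁻¹ ≤ (b⁻¹)⁻¹ := by
              apply inv_anti₀ (by positivity) hαinv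
          _ = b := inv_inv b
    -- upper bound for kobMetric D2
    have hup : ∀ d : ℝ, 0 < d → d < δ2 → kobMetric D2 p v ≤ 1/d := by
      intro d hd hdlt
      apply csInf_le hbdd_below
      apply mem_kobSet D2 p v d hd
      intro z hz
      by_contra hmem
      have h1 : δ2 ≤ dist (0:ℂ) z := infDist_le_dist_of_mem hmem
      rw [dist_zero_left] at h1
      linarith
    have hfinal : kobMetric D2 p v ≤ 1/δ := by
      by_contra hcon
      push_neg at hcon
      have hK2pos : 0 < kobMetric D2 p v := lt_trans (by positivity) hcon
      have h1 : 1/(kobMetric D2 p v) < δ := by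
        rw [one_div] at hcon ⊢
        calc (kobMetric D2 p v)⁻¹ < (δ⁻¹)⁻¹ := by
              apply inv_strictAnti₀ (by positivity) hcon
          _ = δ := inv_inv δ
      set d : ℝ := (1/(kobMetric D2 p v) + δ)/2 with hd
      have hd0 : 0 < d := by positivity
      have hdδ : d < δ := by rw [hd]; linarith
      have hub := hup d hd0 (lt_of_lt_of_le hdδ hδle)
      have h2 : 1/d < kobMetric D2 p v := by
        rw [one_div, ← inv_inv (kobMetric D2 p v)]
        apply inv_strictAnti₀ (by positivity)
        rw [hd]
        have : 0 < (kobMetric D2 p v)⁻¹ := by positivity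
        rw [one_div] at h1 ⊢
        linarith
      linarith
    calc kobMetric D2 p v ≤ 1/δ := hfinal
      _ = 2 * (1/(2*δ)) := by field_simp
      _ ≤ 2 * kobMetric D p v := by linarith
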